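/- For a one-parameter exponential family, define the moment generating function control: for any 0 < λ ≤ κ(θ), where κ(θ) = max{r : ∀θ' ∈ [θ−r, θ+r], A''(θ)/A''(θ') ∈ [1/2, 2]}, one has E_{P_θ}[exp(λ|X − A'(θ)|)] ≤ 2 exp(λ² A''(θ)). -/

import Mathlib

open MeasureTheory Real

/-- MGF control for exponential families: for `0 < λ ≤ κ(θ)` (i.e. the variance `A''`
is 2-stable on `[θ−λ, θ+λ]`), `E_{P_θ}[exp(λ|X − A'(θ)|)] ≤ 2·exp(λ²·A''(θ))`. -/
theorem mgf_control_exponential_family (μ : Measure ℝ) (A A' A'' : ℝ → ℝ) (θ lam : ℝ)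
    (hlam : 0 < lam)
    (hA : ∀ t ∈ Set.Icc (θ - lam) (θ + lam), A t = Real.log (∫ x, Real.exp (t * x) ∂μ))
    (hΦ : ∀ t ∈ Set.Icc (θ - lam) (θ + lam), Integrable (fun x => Real.exp (t * x)) μ)
    (hA' : ∀ t ∈ Set.Icc (θ - lam) (θ + lam), HasDerivAt A (A' t) t)
    (hA'' : ∀ t ∈ Set.Icc (θ - lam) (θ + lam), HasDerivAt A' (A'' t) t)
    (hstab : ∀ t ∈ Set.Icc (θ - lam) (θ + lam),
        0 < A'' t ∧ A'' θ / A'' t ∈ Set.Icc (1 / 2 : ℝ) 2) :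
    ∫ x, Real.exp (lam * |x - A' θ|) * Real.exp (θ * x - A θ) ∂μ
      ≤ 2 * Real.exp (lam ^ 2 * A'' θ) := by
  set s : Set ℝ := Set.Icc (θ - lam) (θ + lam) with hs
  set m : ℝ := A' θ with hm
  set C : ℝ := 2 * A'' θ with hCdef
  have hθs : θ ∈ s := ⟨by linarith, by linarith⟩
  have hps : θ + lam ∈ s := ⟨by linarith, le_refl _⟩
  have hms : θ - lam ∈ s := ⟨le_refl _, by linarith⟩
  have hApos : 0 < A'' θ := (hstab θ hθs).1
  -- A'' is bounded by C on s
  have hCbd : ∀ t ∈ s, ‖A'' t‖ ≤ C := by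
    intro t ht
    have h1 := (hstab t ht).1
    have h2 := ((hstab t ht).2).1
    rw [le_div_iff₀ h1] at h2
    rw [Real.norm_eq_abs, abs_of_pos h1]
    linarith
  -- Lipschitz bound on A'
  have hLip : ∀ t ∈ s, |A' t - m| ≤ C * |t - θ| := by
    intro t ht
    have := Convex.norm_image_sub_le_of_norm_hasDerivWithin_le
      (f := A') (f' := A'') (s := s)
      (fun x hx => (hA'' x hx).hasDerivWithinAt) hCbd (convex_Icc _ _) hθs ht
    simpa [Real.norm_eq_abs] using this
  -- auxiliary function and its derivative
  set F : ℝ → ℝ := fun t => C / 2 * (t - θ) ^ 2 - A t + (t - θ) * m with hFdef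
  have hF : ∀ t ∈ s, HasDerivAt F (C * (t - θ) - A' t + m) t := by
    intro t ht
    have h1 : HasDerivAt (fun u : ℝ => (u - θ) ^ 2) (2 * (t - θ)) t := by
      have := ((hasDerivAt_id t).sub_const θ).fun_pow 2
      simpa using this
    have h2 : HasDerivAt (fun u : ℝ => (u - θ) * m) m t := by
      simpa using ((hasDerivAt_id t).sub_const θ).mul_const m
    have := ((h1.const_mul (C / 2)).fun_sub (hA' t ht)).fun_add h2
    refine this.congr_deriv ?_
    ring
  have hFθ : F θ = -A θ := by simp [hFdef]
  -- right Taylor bound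
  have keyp : A (θ + lam) - A θ - lam * m ≤ lam ^ 2 * A'' θ := by
    have hsub : Set.Icc θ (θ + lam) ⊆ s := Set.Icc_subset_Icc (by linarith) le_rfl
    have hmono : MonotoneOn F (Set.Icc θ (θ + lam)) := by
      apply monotoneOn_of_deriv_nonneg (convex_Icc _ _)
      · exact fun t ht => (hF t (hsub ht)).continuousAt.continuousWithinAt
      · intro t ht
        rw [interior_Icc] at ht
        exact (hF t (hsub (Set.Ioo_subset_Icc_self ht))).differentiableAt.differentiableWithinAt
      · intro t ht
        rw [interior_Icc] at ht
        have hts : t ∈ s := hsub (Set.Ioo_subset_Icc_self ht)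
        rw [(hF t hts).deriv]
        have h1 := hLip t hts
        rw [abs_of_nonneg (by linarith [ht.1] : (0:ℝ) ≤ t - θ)] at h1
        have h2 := abs_le.mp h1
        linarith [h2.1, h2.2]
    have := hmono (Set.left_mem_Icc.mpr (by linarith)) (Set.right_mem_Icc.mpr (by linarith))
      (by linarith)
    rw [hFθ] at this
    have hF2 : F (θ + lam) = C / 2 * lam ^ 2 - A (θ + lam) + lam * m := by
      simp only [hFdef]; ring_nf
    rw [hF2] at this
    nlinarith [this]
  -- left Taylor bound
  have keym : A (θ - lam) - A θ + lam * m ≤ lam ^ 2 * A'' θ := by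
    have hsub : Set.Icc (θ - lam) θ ⊆ s := Set.Icc_subset_Icc le_rfl (by linarith)
    have hanti : AntitoneOn F (Set.Icc (θ - lam) θ) := by
      apply antitoneOn_of_deriv_nonpos (convex_Icc _ _)
      · exact fun t ht => (hF t (hsub ht)).continuousAt.continuousWithinAt
      · intro t ht
        rw [interior_Icc] at ht
        exact (hF t (hsub (Set.Ioo_subset_Icc_self ht))).differentiableAt.differentiableWithinAt
      · intro t ht
        rw [interior_Icc] at ht
        have hts : t ∈ s := hsub (Set.Ioo_subset_Icc_self ht)
        rw [(hF t hts).deriv]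
        have h1 := hLip t hts
        rw [abs_of_nonpos (by linarith [ht.2] : t - θ ≤ (0:ℝ))] at h1
        have h2 := abs_le.mp h1
        linarith [h2.1, h2.2]
    have := hanti (Set.left_mem_Icc.mpr (by linarith)) (Set.right_mem_Icc.mpr (by linarith))
      (by linarith)
    rw [hFθ] at this
    have hF2 : F (θ - lam) = C / 2 * lam ^ 2 - A (θ - lam) - lam * m := by
      simp only [hFdef]; ring_nf
    rw [hF2] at this
    nlinarith [this]
  -- now the integral estimate
  rcases eq_or_ne μ 0 with hμ | hμ
  · simp only [hμ, integral_zero_measure]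
    positivity
  haveI : NeZero μ := ⟨hμ⟩
  have hintp : Integrable (fun x => Real.exp ((θ + lam) * x)) μ := hΦ _ hps
  have hintm : Integrable (fun x => Real.exp ((θ - lam) * x)) μ := hΦ _ hms
  have hIp : ∫ x, Real.exp ((θ + lam) * x) ∂μ = Real.exp (A (θ + lam)) := by
    rw [hA _ hps, Real.exp_log (integral_exp_pos hintp)]
  have hIm : ∫ x, Real.exp ((θ - lam) * x) ∂μ = Real.exp (A (θ - lam)) := by
    rw [hA _ hms, Real.exp_log (integral_exp_pos hintm)]
  set g : ℝ → ℝ := fun x => Real.exp (-(lam * m) - A θ) * Real.exp ((θ + lam) * x)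
      + Real.exp (lam * m - A θ) * Real.exp ((θ - lam) * x) with hgdef
  have hpt : ∀ x, Real.exp (lam * |x - m|) * Real.exp (θ * x - A θ) ≤ g x := by
    intro x
    have h1 : Real.exp (lam * |x - m|)
        ≤ Real.exp (lam * (x - m)) + Real.exp (lam * (m - x)) := by
      rcases abs_cases (x - m) with ⟨h, _⟩ | ⟨h, _⟩
      · rw [h]
        linarith [Real.exp_pos (lam * (m - x))]
      · rw [h, show lam * -(x - m) = lam * (m - x) by ring]
        linarith [Real.exp_pos (lam * (x - m))]
    calc Real.exp (lam * |x - m|) * Real.exp (θ * x - A θ)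
        ≤ (Real.exp (lam * (x - m)) + Real.exp (lam * (m - x))) * Real.exp (θ * x - A θ) :=
          mul_le_mul_of_nonneg_right h1 (Real.exp_pos _).le
      _ = g x := by
          simp only [hgdef, add_mul, ← Real.exp_add]
          ring_nf
  have hgint : Integrable g μ := (hintp.const_mul _).add (hintm.const_mul _)
  have hfmeas : AEStronglyMeasurable
      (fun x => Real.exp (lam * |x - m|) * Real.exp (θ * x - A θ)) μ := by
    apply Continuous.aestronglyMeasurable
    fun_prop
  have hfint : Integrable (fun x => Real.exp (lam * |x - m|) * Real.exp (θ * x - A θ)) μ := by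
    apply hgint.mono' hfmeas
    filter_upwards with x
    rw [Real.norm_eq_abs, abs_of_pos (by positivity)]
    exact hpt x
  calc ∫ x, Real.exp (lam * |x - m|) * Real.exp (θ * x - A θ) ∂μ
      ≤ ∫ x, g x ∂μ := integral_mono hfint hgint hpt
    _ = Real.exp (-(lam * m) - A θ) * Real.exp (A (θ + lam))
        + Real.exp (lam * m - A θ) * Real.exp (A (θ - lam)) := by
        rw [hgdef]
        rw [integral_add (hintp.const_mul _) (hintm.const_mul _),
          integral_const_mul, integral_const_mul, hIp, hIm]
    _ = Real.exp (A (θ + lam) - A θ - lam * m)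
        + Real.exp (A (θ - lam) - A θ + lam * m) := by
        rw [← Real.exp_add, ← Real.exp_add]
        ring_nf
    _ ≤ Real.exp (lam ^ 2 * A'' θ) + Real.exp (lam ^ 2 * A'' θ) := by
        exact add_le_add (Real.exp_le_exp.mpr keyp) (Real.exp_le_exp.mpr keym)
    _ = 2 * Real.exp (lam ^ 2 * A'' θ) := by ring
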